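/- Consider the repeated double auction: for t ≥ 1, D_i^{t−1}(x) := sup{r ∈ ℝ : u_i(x_i^{t−1} + x − r·g) ≥ u_i(x_i^{t−1})}, and suppose x̄^t ∈ (ℝ^J)^I and p^t ∈ ℝ^J satisfy ∑_i x̄_i^t = 0, p^t·g = 1, and p^t is a supergradient of D_i^{t−1} at x̄_i^t for every i, with x_i^t := x_i^{t−1} + x̄_i^t − (p^t·x̄_i^t)·g. Suppose Assumption G holds (each u_i upper semicontinuous, concave, u_i(x_i^0) finite, strictly increasing in direction g) and there are constants δ_i > 0 such that u_i(x + s·g) ≥ u_i(x) + δ_i·s for all s ∈ (0, r] and all x in a ball of radius r containing every x_i^t and every intermediate point x_i^{t−1} + x̄_i^t − D_i^{t−1}(x̄_i^t)·g, where every per-agent surplus D_i^{t−1}(x̄_i^t) − p^t·x̄_i^t is at most r. Then for every t ≥ 1, CS(x^t) ≤ (1/t)·∑_{i∈I} (u_i(x_i^t) − u_i(x_i^0))/δ_i, where CS(w) := sup{s ∈ ℝ : ∃ z ∈ (ℝ^J)^I with ∑_i z_i + s·g = ∑_i w_i and u_i(z_i) ≥ u_i(w_i) for all i}. -/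

import Mathlib

open scoped BigOperators
open Metric Filter

noncomputable section

/-- The inner product `p·y = ∑ j, p j * y j`. -/
def dotp {J : Type*} [Fintype J] (p y : EuclideanSpace ℝ J) : ℝ := ∑ j, p j * y j

/-- A function `u : ℝ^J → ℝ ∪ {±∞}` is concave iff its hypograph is convex. -/
def HypoConcave {J : Type*} [Fintype J] (u : EuclideanSpace ℝ J → EReal) : Prop :=
  Convex ℝ {q : EuclideanSpace ℝ J × ℝ | (q.2 : EReal) ≤ u q.1}

/-- Indifference price function `D(x) = sup {r ∈ ℝ : u(x⁰ + x − r·g) ≥ u(x⁰)}`,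
the supremum being taken in `ℝ ∪ {±∞}`. -/
def indiff {J : Type*} [Fintype J] (u : EuclideanSpace ℝ J → EReal)
    (x0 g x : EuclideanSpace ℝ J) : EReal :=
  sSup {e : EReal | ∃ r : ℝ, e = (r : EReal) ∧ u x0 ≤ u (x0 + x - r • g)}

/-- `p` is a supergradient of `D` at `xb`: `D xb` is finite and
`D x ≤ D xb + p·(x − xb)` for all `x`. -/
def IsSupergradient {J : Type*} [Fintype J] (D : EuclideanSpace ℝ J → EReal)
    (p xb : EuclideanSpace ℝ J) : Prop :=
  D xb ≠ ⊥ ∧ D xb ≠ ⊤ ∧ ∀ x, D x ≤ D xb + ((dotp p (x - xb) : ℝ) : EReal)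

/-- Optimal value `v(z)` of the perturbed market clearing problem `(P_z)`. -/
def marketValue {I J : Type*} [Fintype I] [Fintype J]
    (D : I → EuclideanSpace ℝ J → EReal) (z : EuclideanSpace ℝ J) : EReal :=
  sSup {e : EReal | ∃ x : I → EuclideanSpace ℝ J, (∑ i, x i) = z ∧ e = ∑ i, D i (x i)}

/-- Optimal value of problem `(P')`, the total consumer surplus at allocation `w`. -/
def CSval {I J : Type*} [Fintype I] [Fintype J]
    (u : I → EuclideanSpace ℝ J → EReal) (g : EuclideanSpace ℝ J)
    (w : I → EuclideanSpace ℝ J) : EReal :=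
  sSup {e : EReal | ∃ s : ℝ, e = (s : EReal) ∧ ∃ z : I → EuclideanSpace ℝ J,
    (∑ i, z i) + s • g = ∑ i, w i ∧ ∀ i, u i (w i) ≤ u i (z i)}

/-- Recession function `u^∞(y) = inf_{α>0} (u(x⁰ + α·y) − u(x⁰))/α`. -/
def recession {J : Type*} [Fintype J] (u : EuclideanSpace ℝ J → EReal)
    (x0 y : EuclideanSpace ℝ J) : EReal :=
  sInf {e : EReal | ∃ α : ℝ, 0 < α ∧ e = (u (x0 + α • y) - u x0) / (α : EReal)}

/-- Pareto efficiency of an allocation `x` with total endowment `∑ i, x i`. -/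
def ParetoEfficient {I J : Type*} [Fintype I] [Fintype J]
    (u : I → EuclideanSpace ℝ J → EReal) (x : I → EuclideanSpace ℝ J) : Prop :=
  ¬ ∃ x' : I → EuclideanSpace ℝ J, (∑ i, x' i) = (∑ i, x i) ∧
      (∀ i, u i (x i) ≤ u i (x' i)) ∧ ∃ i, u i (x i) < u i (x' i)


section AuxLemmas

variable {J : Type*} [Fintype J]

lemma dotp_sub' (p a b : EuclideanSpace ℝ J) : dotp p (a - b) = dotp p a - dotp p b := by
  simp [dotp, mul_sub, Finset.sum_sub_distrib]

lemma dotp_zero' (p : EuclideanSpace ℝ J) : dotp p (0 : EuclideanSpace ℝ J) = 0 := by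
  simp [dotp]

lemma dotp_sum' {I : Type*} (s : Finset I) (p : EuclideanSpace ℝ J) (f : I → EuclideanSpace ℝ J) :
    dotp p (∑ i ∈ s, f i) = ∑ i ∈ s, dotp p (f i) := by
  simp only [dotp]
  rw [Finset.sum_comm]
  congr 1; ext j
  rw [WithLp.ofLp_sum, Finset.sum_apply, Finset.mul_sum]

lemma ereal_coe_finsetSum {I : Type*} (s : Finset I) (f : I → ℝ) :
    ((∑ i ∈ s, f i : ℝ) : EReal) = ∑ i ∈ s, (f i : EReal) := by
  induction s using Finset.cons_induction with
  | empty => simp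
  | cons a s ha ih => rw [Finset.sum_cons, Finset.sum_cons, EReal.coe_add, ih]

lemma indiff_attained (u : EuclideanSpace ℝ J → EReal) (x0 g xb : EuclideanSpace ℝ J) (d : ℝ)
    (husc : UpperSemicontinuous u) (hbot : u x0 ≠ ⊥)
    (hmono : ∀ w : EuclideanSpace ℝ J, ∀ s : ℝ, u w ≠ ⊥ → 0 < s → u w < u (w + s • g))
    (hd : (d : EReal) = indiff u x0 g xb) :
    u x0 ≤ u (x0 + xb - d • g) := by
  rw [indiff] at hd
  set S : Set ℝ := {r : ℝ | u x0 ≤ u (x0 + xb - r • g)} with hS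
  have hdown : ∀ r r' : ℝ, r ≤ r' → r' ∈ S → r ∈ S := by
    intro r r' hle hr'
    simp only [hS, Set.mem_setOf_eq] at hr' ⊢
    rcases eq_or_lt_of_le hle with rfl | hlt
    · exact hr'
    · have hne : u (x0 + xb - r' • g) ≠ ⊥ := by
        intro hc; rw [hc] at hr'; exact hbot (le_bot_iff.1 hr')
      have hm := hmono _ (r' - r) hne (by linarith)
      have hvec : (x0 + xb - r' • g) + (r' - r) • g = x0 + xb - r • g := by module
      rw [hvec] at hm
      exact le_of_lt (lt_of_le_of_lt hr' hm)
  have hlow : ∀ r : ℝ, r < d → r ∈ S := by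
    intro r hr
    by_contra hc
    have hub : ∀ e ∈ {e : EReal | ∃ r' : ℝ, e = (r' : EReal) ∧ u x0 ≤ u (x0 + xb - r' • g)},
        e ≤ (r : EReal) := by
      rintro e ⟨r', rfl, hr'⟩
      have : r' ≤ r := by
        by_contra hgt
        exact hc (hdown r r' (le_of_not_ge hgt) hr')
      exact_mod_cast this
    have h2 := sSup_le hub
    rw [← hd] at h2
    have : d ≤ r := by exact_mod_cast h2
    linarith
  have hclosed : IsClosed S := by
    have hcont : Continuous fun r : ℝ => x0 + xb - r • g :=
      continuous_const.sub (continuous_id.smul continuous_const)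
    exact (husc.isClosed_preimage (u x0)).preimage hcont
  have hmem : d ∈ closure S := by
    have h1 : d ∈ closure (Set.Iio d) := by rw [closure_Iio]; exact Set.self_mem_Iic
    exact closure_mono (fun r hr => hlow r hr) h1
  rwa [hclosed.closure_eq] at hmem

end AuxLemmas

/-- convergence rate of the total consumer surplus in the repeated
double auction. Step `t` (for `t = 0, 1, 2, …`) takes the allocation `x t` to
`x (t+1)` trading `xb t` at prices `pr t`; `d t i` is the real value of the
indifference price `D_i^t(x̄_i^{t+1})`. -/
theorem repeated_auction_surplus_rate
    {I J : Type*} [Fintype I] [Nonempty I] [Fintype J] [Nonempty J]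
    (u : I → EuclideanSpace ℝ J → EReal) (g : EuclideanSpace ℝ J)
    (x : ℕ → I → EuclideanSpace ℝ J)
    (xb : ℕ → I → EuclideanSpace ℝ J)
    (pr : ℕ → EuclideanSpace ℝ J)
    (d : ℕ → I → ℝ)
    -- Assumption G
    (husc : ∀ i, UpperSemicontinuous (u i))
    (hconc : ∀ i, HypoConcave (u i))
    (hne_top : ∀ i w, u i w ≠ ⊤)
    (hfin0 : ∀ i, u i (x 0 i) ≠ ⊥)
    (hmono : ∀ i, ∀ w : EuclideanSpace ℝ J, ∀ s : ℝ, u i w ≠ ⊥ → 0 < s →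
      u i w < u i (w + s • g))
    -- auction dynamics
    (hclear : ∀ t, (∑ i, xb t i) = 0)
    (hpg : ∀ t, dotp (pr t) g = 1)
    (hsg : ∀ t i, IsSupergradient (indiff (u i) (x t i) g) (pr t) (xb t i))
    (hd : ∀ t i, (d t i : EReal) = indiff (u i) (x t i) g (xb t i))
    (hupd : ∀ t i, x (t + 1) i = x t i + xb t i - dotp (pr t) (xb t i) • g)
    -- the uniform-gain assumption on a ball of radius r
    (r : ℝ) (hr : 0 < r)
    (hxball : ∀ t i, x t i ∈ Metric.closedBall (0 : EuclideanSpace ℝ J) r)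
    (hyball : ∀ t i,
      x t i + xb t i - d t i • g ∈ Metric.closedBall (0 : EuclideanSpace ℝ J) r)
    (hsurp : ∀ t i, d t i - dotp (pr t) (xb t i) ≤ r)
    (δ : I → ℝ) (hδ : ∀ i, 0 < δ i)
    (hgain : ∀ i, ∀ s : ℝ, 0 < s → s ≤ r →
      ∀ w ∈ Metric.closedBall (0 : EuclideanSpace ℝ J) r,
        u i w + ((δ i * s : ℝ) : EReal) ≤ u i (w + s • g)) :
    ∀ t : ℕ, 1 ≤ t →
      CSval u g (x t) ≤
        ((1 / (t : ℝ) : ℝ) : EReal) *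
          ∑ i, (u i (x t i) - u i (x 0 i)) / ((δ i : ℝ) : EReal) := by
  classical
  -- nonnegativity of the per-agent surplus
  have hS_nonneg : ∀ t i, 0 ≤ d t i - dotp (pr t) (xb t i) := by
    intro t i
    have h0 : (0 : EReal) ≤ indiff (u i) (x t i) g 0 := by
      apply le_sSup
      refine ⟨0, by norm_num, ?_⟩
      simp
    have h1 := (hsg t i).2.2 0
    rw [← hd t i] at h1
    have h2 : (0 : EReal) ≤ ((d t i : ℝ) : EReal) + ((dotp (pr t) (0 - xb t i) : ℝ) : EReal) :=
      le_trans h0 h1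
    rw [← EReal.coe_add] at h2
    have h3 : (0 : ℝ) ≤ d t i + dotp (pr t) (0 - xb t i) := by exact_mod_cast h2
    rw [dotp_sub', dotp_zero'] at h3
    linarith
  -- the gain at each step
  have hstep : ∀ t i, u i (x t i) ≠ ⊥ →
      u i (x t i) + ((δ i * (d t i - dotp (pr t) (xb t i)) : ℝ) : EReal) ≤ u i (x (t + 1) i) := by
    intro t i hb
    have hmem : u i (x t i) ≤ u i (x t i + xb t i - d t i • g) :=
      indiff_attained (u i) (x t i) g (xb t i) (d t i) (husc i) hb (hmono i) (hd t i)
    have hvec : x (t + 1) i =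
        (x t i + xb t i - d t i • g) + (d t i - dotp (pr t) (xb t i)) • g := by
      rw [hupd t i]; module
    rcases eq_or_lt_of_le (hS_nonneg t i) with h0 | hpos
    · rw [hvec, ← h0]
      simp only [mul_zero, EReal.coe_zero, add_zero, zero_smul]
      exact hmem
    · have hg2 := hgain i (d t i - dotp (pr t) (xb t i)) hpos (hsurp t i)
        (x t i + xb t i - d t i • g) (hyball t i)
      rw [hvec]
      calc u i (x t i) + ((δ i * (d t i - dotp (pr t) (xb t i)) : ℝ) : EReal)
          ≤ u i (x t i + xb t i - d t i • g) +
              ((δ i * (d t i - dotp (pr t) (xb t i)) : ℝ) : EReal) := add_le_add_left hmem _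
        _ ≤ _ := hg2
  -- utilities never become -infinity along the path
  have hbot : ∀ t i, u i (x t i) ≠ ⊥ := by
    intro t
    induction t with
    | zero => exact hfin0
    | succ t ih =>
      intro i
      have h1 := hstep t i (ih i)
      intro hc
      rw [hc, le_bot_iff] at h1
      rcases EReal.add_eq_bot_iff.1 h1 with h | h
      · exact ih i h
      · exact EReal.coe_ne_bot _ h
  -- utilities are nondecreasing along the path
  have hincr : ∀ t i, u i (x t i) ≤ u i (x (t + 1) i) := by
    intro t i
    refine le_trans ?_ (hstep t i (hbot t i))
    exact le_add_of_nonneg_right (EReal.coe_nonneg.2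
      (mul_nonneg (le_of_lt (hδ i)) (hS_nonneg t i)))
  -- real values of the utilities along the path
  have hrealv : ∀ t i, ∃ w : ℝ, u i (x t i) = (w : EReal) := fun t i =>
    ⟨(u i (x t i)).toReal, (EReal.coe_toReal (hne_top i _) (hbot t i)).symm⟩
  choose v hv using hrealv
  -- real form of the step inequality
  have hvstep : ∀ t i, v t i + δ i * (d t i - dotp (pr t) (xb t i)) ≤ v (t + 1) i := by
    intro t i
    have h1 := hstep t i (hbot t i)
    rw [hv t i, hv (t + 1) i, ← EReal.coe_add] at h1
    exact_mod_cast h1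
  -- total endowment is conserved
  have hsum_step : ∀ t, (∑ i, x (t + 1) i) = ∑ i, x t i := by
    intro t
    have h1 : (∑ i, x (t + 1) i) =
        ∑ i, (x t i + xb t i - dotp (pr t) (xb t i) • g) :=
      Finset.sum_congr rfl fun i _ => hupd t i
    rw [h1, Finset.sum_sub_distrib, Finset.sum_add_distrib, hclear t, ← Finset.sum_smul,
      ← dotp_sum', hclear t, dotp_zero', zero_smul, add_zero, sub_zero]
  -- consumer surplus bounded by the trade surplus
  have hCS_le : ∀ t, CSval u g (x t) ≤
      ((∑ i, (d t i - dotp (pr t) (xb t i)) : ℝ) : EReal) := by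
    intro t
    rw [CSval]
    apply sSup_le
    rintro e ⟨s, rfl, z, hzsum, hzu⟩
    set n : ℝ := (Fintype.card I : ℝ) with hn
    have hnpos : (0 : ℝ) < n := by
      rw [hn]; exact_mod_cast Fintype.card_pos
    set xi : I → EuclideanSpace ℝ J := fun i => z i - x t i + (s / n) • g with hxi
    have hkey : ∀ i, s / n ≤ d t i + dotp (pr t) (xi i - xb t i) := by
      intro i
      have hmem2 : ((s / n : ℝ) : EReal) ≤ indiff (u i) (x t i) g (xi i) := by
        apply le_sSup
        refine ⟨s / n, rfl, ?_⟩
        have hvec2 : x t i + xi i - (s / n) • g = z i := by rw [hxi]; module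
        rw [hvec2]
        exact hzu i
      have h1 := (hsg t i).2.2 (xi i)
      rw [← hd t i] at h1
      have h2 := le_trans hmem2 h1
      rw [← EReal.coe_add] at h2
      exact_mod_cast h2
    have hxi0 : (∑ i, xi i) = 0 := by
      have h1 : (∑ i, xi i) =
          (∑ i, z i) - (∑ i, x t i) + (Fintype.card I) • ((s / n) • g) := by
        simp [hxi, Finset.sum_add_distrib, Finset.sum_sub_distrib, Finset.sum_const]
      have h2 : (Fintype.card I) • ((s / n) • g) = s • g := by
        rw [← Nat.cast_smul_eq_nsmul ℝ, smul_smul, ← hn]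
        congr 1
        field_simp
      rw [h1, h2]
      have h3 : (∑ i, z i) - (∑ i, x t i) + s • g = ((∑ i, z i) + s • g) - (∑ i, x t i) := by
        abel
      rw [h3, hzsum, sub_self]
    have hsum2 : (∑ _i : I, s / n) ≤
        ∑ i, (d t i + (dotp (pr t) (xi i) - dotp (pr t) (xb t i))) := by
      refine Finset.sum_le_sum fun i _ => ?_
      have := hkey i
      rw [dotp_sub'] at this
      linarith
    have hleft : (∑ _i : I, s / n : ℝ) = s := by
      rw [Finset.sum_const, Finset.card_univ, nsmul_eq_mul, ← hn]
      field_simp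
    have hdot0 : (∑ i, dotp (pr t) (xi i)) = 0 := by
      rw [← dotp_sum', hxi0, dotp_zero']
    have hright : (∑ i, (d t i + (dotp (pr t) (xi i) - dotp (pr t) (xb t i))))
        = ∑ i, (d t i - dotp (pr t) (xb t i)) := by
      rw [Finset.sum_add_distrib, Finset.sum_sub_distrib, hdot0, zero_sub,
        Finset.sum_sub_distrib]
      ring
    rw [hleft, hright] at hsum2
    exact_mod_cast hsum2
  -- consumer surplus is nonincreasing
  have hCSmono : ∀ t, CSval u g (x (t + 1)) ≤ CSval u g (x t) := by
    intro t
    rw [CSval, CSval]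
    apply sSup_le_sSup
    rintro e ⟨s, rfl, z, hz1, hz2⟩
    exact ⟨s, rfl, z, by rw [hz1, hsum_step t], fun i => le_trans (hincr t i) (hz2 i)⟩
  have hCSchain : ∀ s t : ℕ, s ≤ t → CSval u g (x t) ≤ CSval u g (x s) := by
    intro s t hst
    induction t, hst using Nat.le_induction with
    | base => exact le_refl _
    | succ t hst ih => exact le_trans (hCSmono t) ih
  -- final assembly
  intro t ht
  have ht0 : (0 : ℝ) < (t : ℝ) := by exact_mod_cast lt_of_lt_of_le zero_lt_one ht
  set B : ℝ := (1 / (t : ℝ)) * ∑ i, (v t i - v 0 i) / δ i with hB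
  -- telescoping bound on the sum of trade surpluses
  have hcsum : (∑ s ∈ Finset.range t, ∑ i, (d s i - dotp (pr s) (xb s i)))
      ≤ ∑ i, (v t i - v 0 i) / δ i := by
    have h1 : ∀ s i, d s i - dotp (pr s) (xb s i) ≤ (v (s + 1) i - v s i) / δ i := by
      intro s i
      rw [le_div_iff₀ (hδ i)]
      have := hvstep s i
      nlinarith [hvstep s i]
    calc (∑ s ∈ Finset.range t, ∑ i, (d s i - dotp (pr s) (xb s i)))
        ≤ ∑ s ∈ Finset.range t, ∑ i, (v (s + 1) i - v s i) / δ i :=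
          Finset.sum_le_sum fun s _ => Finset.sum_le_sum fun i _ => h1 s i
      _ = ∑ i, ∑ s ∈ Finset.range t, (v (s + 1) i - v s i) / δ i := Finset.sum_comm
      _ = ∑ i, (v t i - v 0 i) / δ i := by
          refine Finset.sum_congr rfl fun i _ => ?_
          have h2 : ∀ s : ℕ, (v (s + 1) i - v s i) / δ i = v (s + 1) i / δ i - v s i / δ i :=
            fun s => sub_div _ _ _
          rw [Finset.sum_congr rfl fun s _ => h2 s, Finset.sum_range_sub (fun s => v s i / δ i),
            ← sub_div]
  -- some trade surplus is at most the average B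
  have hsumB : (∑ s ∈ Finset.range t, ∑ i, (d s i - dotp (pr s) (xb s i)))
      ≤ ∑ _s ∈ Finset.range t, B := by
    rw [Finset.sum_const, Finset.card_range, nsmul_eq_mul, hB]
    calc _ ≤ ∑ i, (v t i - v 0 i) / δ i := hcsum
      _ = (t : ℝ) * ((1 / (t : ℝ)) * ∑ i, (v t i - v 0 i) / δ i) := by
          field_simp
  obtain ⟨s0, hs0mem, hs0B⟩ :=
    Finset.exists_le_of_sum_le (Finset.nonempty_range_iff.2 (by omega)) hsumB
  have hs0t : s0 ≤ t := le_of_lt (Finset.mem_range.1 hs0mem)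
  have hfinal : CSval u g (x t) ≤ (B : EReal) :=
    le_trans (le_trans (hCSchain s0 t hs0t) (hCS_le s0)) (EReal.coe_le_coe_iff.2 hs0B)
  -- rewrite the right-hand side as the coercion of B
  have hterm : ∀ i, (u i (x t i) - u i (x 0 i)) / ((δ i : ℝ) : EReal)
      = (((v t i - v 0 i) / δ i : ℝ) : EReal) := by
    intro i
    rw [hv t i, hv 0 i, ← EReal.coe_sub, ← EReal.coe_div]
  rw [Finset.sum_congr rfl fun i _ => hterm i, ← ereal_coe_finsetSum, ← EReal.coe_mul]
  exact hfinal
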